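/- arXiv:0709.0306 — 2 statements merged into one kernel-verified Lean document; each statement's English description precedes it below -/
import Mathlib

section
/- Let $W:\mathbb{R}\to\mathbb{R}$ be strictly increasing and right-continuous with $W(0)=0$, and let $f:\mathbb{R}\to\mathbb{R}$ be right-continuous and $h:\mathbb{R}\to\mathbb{R}$ be continuous. Then the following are equivalent: (i) for every $x\in\mathbb{R}$, the limit $\lim_{\epsilon\to 0}\frac{f(x+\epsilon)-f(x)}{W(x+\epsilon)-W(x)}$ exists and equals $h(x)$; (ii) for all $a<b$, $f(b)-f(a) = \int_{(a,b]} h(y)\, dW(y)$, where $dW$ denotes the Lebesgue–Stieltjes measure associated to $W$. -/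
open MeasureTheory Filter Topology

/-- Key estimate: if `h` is within `δ` of `c` on `(a,b]`, then the averaged Stieltjes
integral over `(a,b]` is within `δ` of `c`. -/
lemma ratio_est (W : StieltjesFunction ℝ) (hW : StrictMono W) {h : ℝ → ℝ} (hh : Continuous h)
    {a b c δ : ℝ} (hab : a < b) (hδ : ∀ t ∈ Set.Ioc a b, |h t - c| ≤ δ) :
    |(∫ y in Set.Ioc a b, h y ∂W.measure) / (W b - W a) - c| ≤ δ := by
  have hd : 0 < W b - W a := sub_pos.2 (hW hab)
  have hμ : W.measure (Set.Ioc a b) = ENNReal.ofReal (W b - W a) := W.measure_Ioc a b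
  have hμfin : W.measure (Set.Ioc a b) < ⊤ := by rw [hμ]; exact ENNReal.ofReal_lt_top
  have htoReal : (W.measure (Set.Ioc a b)).toReal = W b - W a := by
    rw [hμ, ENNReal.toReal_ofReal hd.le]
  have hint : IntegrableOn h (Set.Ioc a b) W.measure :=
    (intervalIntegrable_iff_integrableOn_Ioc_of_le hab.le).1 (hh.intervalIntegrable a b)
  have hkey : |∫ y in Set.Ioc a b, (h y - c) ∂W.measure| ≤ δ * (W b - W a) := by
    have := norm_setIntegral_le_of_norm_le_const (f := fun y => h y - c) hμfin
      (fun t ht => by simpa [Real.norm_eq_abs] using hδ t ht)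
    rwa [Real.norm_eq_abs, measureReal_def, htoReal] at this
  have hconst : IntegrableOn (fun _ : ℝ => c) (Set.Ioc a b) W.measure :=
    (integrableOn_const_iff).2 (Or.inr hμfin)
  have hsub : ∫ y in Set.Ioc a b, (h y - c) ∂W.measure
      = (∫ y in Set.Ioc a b, h y ∂W.measure) - (W b - W a) * c := by
    rw [integral_sub hint hconst, setIntegral_const, measureReal_def, htoReal, smul_eq_mul]
  have heq : (∫ y in Set.Ioc a b, h y ∂W.measure) / (W b - W a) - c
      = ((∫ y in Set.Ioc a b, h y ∂W.measure) - (W b - W a) * c) / (W b - W a) := by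
    field_simp
  rw [heq, ← hsub, abs_div, abs_of_pos hd, div_le_iff₀ hd]
  exact hkey

/-- If `F` satisfies the Stieltjes integral identity for `h`, then `dF/dW = h` pointwise. -/
lemma tendsto_ratio (W : StieltjesFunction ℝ) (hW : StrictMono W) {F h : ℝ → ℝ}
    (hh : Continuous h)
    (hFint : ∀ a b : ℝ, a < b → F b - F a = ∫ y in Set.Ioc a b, h y ∂W.measure) (x : ℝ) :
    Tendsto (fun ε : ℝ => (F (x + ε) - F x) / (W (x + ε) - W x)) (𝓝[≠] 0) (𝓝 (h x)) := by
  rw [Metric.tendsto_nhds]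
  intro δ hδ
  obtain ⟨η, hη, hcont⟩ : ∃ η > 0, ∀ t : ℝ, dist t x < η → dist (h t) (h x) < δ / 2 :=
    Metric.continuous_iff.1 hh x (δ / 2) (by linarith)
  rw [eventually_nhdsWithin_iff, Metric.eventually_nhds_iff]
  refine ⟨η, hη, fun {ε} hε hε0 => ?_⟩
  have hε0' : ε ≠ 0 := by simpa using hε0
  rw [Real.dist_eq, sub_zero] at hε
  rw [Real.dist_eq]
  have key : |(F (x + ε) - F x) / (W (x + ε) - W x) - h x| ≤ δ / 2 := by
    rcases lt_or_gt_of_ne hε0' with hlt | hgt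
    · have hab : x + ε < x := by linarith
      have e1 : F (x + ε) - F x = -(∫ y in Set.Ioc (x + ε) x, h y ∂W.measure) := by
        rw [← hFint _ _ hab]; ring
      have e2 : W (x + ε) - W x = -(W x - W (x + ε)) := by ring
      rw [e1, e2, neg_div_neg_eq]
      refine ratio_est W hW hh hab (fun t ht => ?_)
      have : dist t x < η := by
        rw [Real.dist_eq, abs_of_nonpos (by linarith [ht.2] : t - x ≤ 0)]
        have := ht.1
        rw [abs_of_neg hlt] at hε
        linarith
      simpa [Real.dist_eq] using (hcont t this).le
    · have hab : x < x + ε := by linarith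
      rw [hFint _ _ hab]
      refine ratio_est W hW hh hab (fun t ht => ?_)
      have : dist t x < η := by
        rw [Real.dist_eq, abs_of_pos (by linarith [ht.1] : 0 < t - x)]
        have := ht.2
        rw [abs_of_pos hgt] at hε
        linarith
      simpa [Real.dist_eq] using (hcont t this).le
  linarith

/-- A function with zero generalized derivative `dg/dW` everywhere is constant. -/
lemma const_of_zero_deriv (W : StieltjesFunction ℝ) (hW : StrictMono W) {g : ℝ → ℝ}
    (hg : ∀ x : ℝ, Tendsto (fun ε : ℝ => (g (x + ε) - g x) / (W (x + ε) - W x))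
      (𝓝[≠] 0) (𝓝 0)) {a b : ℝ} (hab : a < b) : g b = g a := by
  have key : ∀ ε : ℝ, 0 < ε → |g b - g a| ≤ ε * (W b - W a) := by
    intro ε hε
    have hd : ∀ x : ℝ, ∃ δ > 0, ∀ z : ℝ, z ≠ 0 → |z| < δ →
        |g (x + z) - g x| ≤ ε * |W (x + z) - W x| := by
      intro x
      have h1 := Metric.tendsto_nhds.1 (hg x) ε hε
      rw [eventually_nhdsWithin_iff, Metric.eventually_nhds_iff] at h1
      obtain ⟨δ, hδ, H⟩ := h1
      refine ⟨δ, hδ, fun z hz0 hz => ?_⟩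
      have h2 := H (y := z) (by simpa [Real.dist_eq] using hz) (by simpa using hz0)
      rw [Real.dist_eq, sub_zero] at h2
      have hWne : W (x + z) - W x ≠ 0 := by
        rcases lt_or_gt_of_ne hz0 with hlt | hgt
        · exact sub_ne_zero.2 (ne_of_lt (hW (by linarith)))
        · exact sub_ne_zero.2 (ne_of_gt (hW (by linarith)))
      calc |g (x + z) - g x|
          = |(g (x + z) - g x) / (W (x + z) - W x)| * |W (x + z) - W x| := by
            rw [← abs_mul, div_mul_cancel₀ _ hWne]
        _ ≤ ε * |W (x + z) - W x| :=
            mul_le_mul_of_nonneg_right h2.le (abs_nonneg _)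
    set T := {x : ℝ | x ∈ Set.Icc a b ∧ |g x - g a| ≤ ε * (W x - W a)} with hT
    have haT : a ∈ T := ⟨⟨le_refl a, hab.le⟩, by simp⟩
    have hbdd : BddAbove T := ⟨b, fun x hx => hx.1.2⟩
    set c := sSup T with hc
    have hac : a ≤ c := le_csSup hbdd haT
    have hcb : c ≤ b := csSup_le ⟨a, haT⟩ (fun x hx => hx.1.2)
    have hcT : |g c - g a| ≤ ε * (W c - W a) := by
      rcases eq_or_lt_of_le hac with heq | hlt
      · simp [← heq]
      · obtain ⟨δ, hδ, H⟩ := hd c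
        have hmin : 0 < min δ (c - a) := lt_min hδ (by linarith)
        obtain ⟨x, hxT, hx⟩ := exists_lt_of_lt_csSup ⟨a, haT⟩
          (show c - min δ (c - a) < c by linarith)
        have hxc : x ≤ c := le_csSup hbdd hxT
        rcases eq_or_lt_of_le hxc with heq2 | hlt2
        · rw [← heq2]; exact hxT.2
        · have h1 := H (x - c) (sub_ne_zero.2 hlt2.ne)
            (by
              rw [abs_of_neg (by linarith : x - c < 0)]
              have := min_le_left δ (c - a)
              linarith)
          rw [add_sub_cancel] at h1
          have hWx : |W x - W c| = W c - W x := by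
            rw [abs_of_neg (sub_neg.2 (hW hlt2)), neg_sub]
          rw [hWx] at h1
          calc |g c - g a| ≤ |g c - g x| + |g x - g a| := abs_sub_le _ _ _
            _ ≤ ε * (W c - W x) + ε * (W x - W a) :=
                add_le_add (by rwa [abs_sub_comm] at h1) hxT.2
            _ = ε * (W c - W a) := by ring
    have hceq : c = b := by
      by_contra hne
      have hcb2 : c < b := lt_of_le_of_ne hcb hne
      obtain ⟨δ, hδ, H⟩ := hd c
      set z := min δ (b - c) / 2 with hz
      have hz0 : 0 < z := div_pos (lt_min hδ (by linarith)) two_pos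
      have hzδ : z < δ := by
        have := min_le_left δ (b - c); rw [hz]; linarith
      have hyb : c + z ≤ b := by
        have := min_le_right δ (b - c); rw [hz] at *; linarith
      have h1 := H z hz0.ne' (by rw [abs_of_pos hz0]; exact hzδ)
      have hWy : |W (c + z) - W c| = W (c + z) - W c :=
        abs_of_pos (sub_pos.2 (hW (by linarith)))
      rw [hWy] at h1
      have hyT : c + z ∈ T := by
        refine ⟨⟨by linarith, hyb⟩, ?_⟩
        calc |g (c + z) - g a| ≤ |g (c + z) - g c| + |g c - g a| := abs_sub_le _ _ _
          _ ≤ ε * (W (c + z) - W c) + ε * (W c - W a) := add_le_add h1 hcT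
          _ = ε * (W (c + z) - W a) := by ring
      have := le_csSup hbdd hyT
      linarith
    rw [← hceq]
    exact hcT
  have hD : 0 < W b - W a := sub_pos.2 (hW hab)
  by_contra hne
  have habs : 0 < |g b - g a| := abs_pos.2 (sub_ne_zero.2 hne)
  have h1 := key (|g b - g a| / (2 * (W b - W a))) (by positivity)
  have h2 : |g b - g a| / (2 * (W b - W a)) * (W b - W a) = |g b - g a| / 2 := by
    field_simp
  rw [h2] at h1
  linarith

/-- Equivalence between the generalized derivative `df/dW = h` (pointwise two-sided limit)
and the Stieltjes integral identity `f b - f a = ∫_(a,b] h dW`, for `W` strictly increasing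
right continuous with `W 0 = 0`, `f` right continuous and `h` continuous. -/
theorem stmt_1 (W : StieltjesFunction ℝ) (hW : StrictMono W) (hW0 : W 0 = 0)
    (f h : ℝ → ℝ)
    (hf : ∀ x, ContinuousWithinAt f (Set.Ici x) x)
    (hh : Continuous h) :
    (∀ x : ℝ, Tendsto (fun ε : ℝ => (f (x + ε) - f x) / (W (x + ε) - W x))
        (𝓝[≠] 0) (𝓝 (h x)))
      ↔ (∀ a b : ℝ, a < b → f b - f a = ∫ y in Set.Ioc a b, h y ∂W.measure) := by
  constructor
  · intro hi
    set F : ℝ → ℝ := fun x => ∫ t in (0:ℝ)..x, h t ∂W.measure with hFdef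
    have hii : ∀ u v : ℝ, IntervalIntegrable h W.measure u v :=
      fun u v => hh.intervalIntegrable u v
    have hF : ∀ a b : ℝ, a < b → F b - F a = ∫ y in Set.Ioc a b, h y ∂W.measure := by
      intro a b hab
      have hadd := intervalIntegral.integral_add_adjacent_intervals (hii 0 a) (hii a b)
      have : F b - F a = ∫ t in a..b, h t ∂W.measure := by
        rw [hFdef]; simp only [← hadd]; ring
      rw [this, intervalIntegral.integral_of_le hab.le]
    have hgderiv : ∀ x : ℝ, Tendsto
        (fun ε : ℝ => ((f (x + ε) - F (x + ε)) - (f x - F x)) / (W (x + ε) - W x))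
        (𝓝[≠] 0) (𝓝 0) := by
      intro x
      have h1 := (hi x).sub (tendsto_ratio W hW hh hF x)
      rw [sub_self] at h1
      have hfun : (fun ε : ℝ => ((f (x + ε) - F (x + ε)) - (f x - F x)) / (W (x + ε) - W x))
          = fun ε : ℝ => (f (x + ε) - f x) / (W (x + ε) - W x)
            - (F (x + ε) - F x) / (W (x + ε) - W x) := by
        funext ε
        rw [← sub_div]
        ring_nf
      rw [hfun]
      exact h1
    intro a b hab
    have h2 : f b - f a = F b - F a := by
      have h3 : f b - F b = f a - F a :=
        const_of_zero_deriv W hW (g := fun y => f y - F y) hgderiv hab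
      linarith
    rename' h2 => heq
    rw [heq, hF a b hab]
  · intro hi x
    exact tendsto_ratio W hW hh hi x
end

section
/- Let $W:\mathbb{R}\to\mathbb{R}$ be a strictly increasing càdlàg function whose set of jump points $\mathbb{D}(W)$ is dense in $\mathbb{R}$. If $f:\mathbb{R}\to\mathbb{R}$ is continuous, the generalized derivative $\frac{df}{dW}(x) = \lim_{\epsilon\to 0}\frac{f(x+\epsilon)-f(x)}{W(x+\epsilon)-W(x)}$ exists for every $x$, and $x \mapsto \frac{df}{dW}(x)$ is differentiable with continuous derivative, then $f$ is constant. -/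
open Filter Topology

lemma mono_of_loc (h : ℝ → ℝ)
    (H : ∀ x : ℝ, ∃ η > (0:ℝ), (∀ y, x < y → y < x + η → h x ≤ h y) ∧
      (∀ y, x - η < y → y < x → h y ≤ h x)) :
    Monotone h := by
  intro a b hab
  rcases eq_or_lt_of_le hab with rfl | hab
  · exact le_refl _
  set S := {x : ℝ | x ∈ Set.Icc a b ∧ h a ≤ h x} with hS
  have haS : a ∈ S := ⟨⟨le_refl a, hab.le⟩, le_refl _⟩
  have hbdd : BddAbove S := ⟨b, fun x hx => hx.1.2⟩
  set c := sSup S with hc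
  have hcmem : c ∈ Set.Icc a b :=
    ⟨le_csSup hbdd haS, csSup_le ⟨a, haS⟩ (fun x hx => hx.1.2)⟩
  obtain ⟨η, hη, hR, hL⟩ := H c
  have hac : h a ≤ h c := by
    obtain ⟨x, hxS, hxlt⟩ := exists_lt_of_lt_csSup ⟨a, haS⟩
      (show c - η < c by linarith)
    have hxc : x ≤ c := le_csSup hbdd hxS
    rcases eq_or_lt_of_le hxc with rfl | hxc
    · exact hxS.2
    · exact hxS.2.trans (hL x (by linarith) hxc)
  have hcb : c = b := by
    by_contra hne
    have hclt : c < b := lt_of_le_of_ne hcmem.2 hne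
    set y := min (c + η / 2) ((c + b) / 2) with hy
    have hy1 : c < y := lt_min (by linarith) (by linarith)
    have hy2 : y < c + η := lt_of_le_of_lt (min_le_left _ _) (by linarith)
    have hy3 : y ≤ b := le_trans (min_le_right _ _) (by linarith)
    have hyS : y ∈ S := ⟨⟨hcmem.1.trans hy1.le, hy3⟩, hac.trans (hR y hy1 hy2)⟩
    exact absurd (le_csSup hbdd hyS) (not_le.2 hy1)
  rw [hcb] at hac
  exact hac

/-- If `W` is strictly increasing càdlàg with a dense set of jump points, `f` is continuous,
the generalized derivative `g = df/dW` exists everywhere, and `g` is differentiable with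
continuous derivative, then `f` is constant. -/
theorem stmt_2 (W : StieltjesFunction ℝ) (hW : StrictMono W)
    (hdense : Dense {x : ℝ | Function.leftLim W x ≠ W x})
    (f g : ℝ → ℝ) (hf : Continuous f)
    (hg : ∀ x : ℝ, Tendsto (fun ε : ℝ => (f (x + ε) - f x) / (W (x + ε) - W x))
        (𝓝[≠] 0) (𝓝 (g x)))
    (hgdiff : Differentiable ℝ g) (hgcont : Continuous (deriv g)) :
    ∀ x y : ℝ, f x = f y := by
  -- Step 1: g vanishes at jump points.
  have hjump : ∀ x ∈ {x : ℝ | Function.leftLim W x ≠ W x}, g x = 0 := by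
    intro x hx
    have hadd : Tendsto (fun ε : ℝ => x + ε) (𝓝[<] (0:ℝ)) (𝓝[<] x) := by
      apply tendsto_nhdsWithin_of_tendsto_nhds_of_eventually_within
      · have : Tendsto (fun ε : ℝ => x + ε) (𝓝 (0:ℝ)) (𝓝 (x + 0)) :=
          (continuous_const.add continuous_id).tendsto 0
        simpa using this.mono_left nhdsWithin_le_nhds
      · filter_upwards [self_mem_nhdsWithin] with ε (hε : ε < 0)
        simpa using by linarith
    have hWlim : Tendsto (fun ε : ℝ => W (x + ε)) (𝓝[<] (0:ℝ))
        (𝓝 (Function.leftLim W x)) :=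
      (W.mono.tendsto_leftLim x).comp hadd
    have hflim : Tendsto (fun ε : ℝ => f (x + ε)) (𝓝[<] (0:ℝ)) (𝓝 (f x)) := by
      have : Tendsto (fun ε : ℝ => x + ε) (𝓝[<] (0:ℝ)) (𝓝 x) :=
        hadd.mono_right nhdsWithin_le_nhds
      exact (hf.tendsto x).comp this
    have hden : Function.leftLim W x - W x ≠ 0 := sub_ne_zero.2 hx
    have hq : Tendsto (fun ε : ℝ => (f (x + ε) - f x) / (W (x + ε) - W x))
        (𝓝[<] (0:ℝ)) (𝓝 ((f x - f x) / (Function.leftLim W x - W x))) :=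
      (hflim.sub tendsto_const_nhds).div (hWlim.sub tendsto_const_nhds) hden
    have hq0 : Tendsto (fun ε : ℝ => (f (x + ε) - f x) / (W (x + ε) - W x))
        (𝓝[<] (0:ℝ)) (𝓝 0) := by simpa using hq
    have hsub : Set.Iio (0:ℝ) ⊆ {(0:ℝ)}ᶜ := fun ε hε => ne_of_lt hε
    have hg' := (hg x).mono_left (nhdsWithin_mono (0:ℝ) hsub)
    exact tendsto_nhds_unique hg' hq0
  -- Step 2: g ≡ 0.
  have hg0 : g = 0 := Continuous.ext_on hdense hgdiff.continuous continuous_const hjump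
  -- Step 3: for every δ > 0, x ↦ δ * W x + f x and x ↦ δ * W x - f x are monotone.
  have key : ∀ δ > (0:ℝ), ∀ a b : ℝ, a ≤ b → |f b - f a| ≤ δ * (W b - W a) := by
    intro δ hδ
    have hloc : ∀ x : ℝ, ∃ η > (0:ℝ), ∀ ε : ℝ, 0 < |ε| → |ε| < η →
        |f (x + ε) - f x| ≤ δ * |W (x + ε) - W x| := by
      intro x
      have := hg x
      rw [hg0] at this
      have hev : ∀ᶠ ε in 𝓝[≠] (0:ℝ),
          |(f (x + ε) - f x) / (W (x + ε) - W x)| < δ := by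
        have := this.eventually (eventually_abs_sub_lt 0 hδ)
        simpa using this
      rw [eventually_nhdsWithin_iff, Metric.eventually_nhds_iff] at hev
      obtain ⟨η, hη, hev⟩ := hev
      refine ⟨η, hη, fun ε hε1 hε2 => ?_⟩
      have hεne : ε ≠ 0 := abs_pos.1 hε1
      have h1 := hev (y := ε) (by simpa [Real.dist_eq] using hε2) hεne
      have hWne : W (x + ε) - W x ≠ 0 := by
        rcases hεne.lt_or_gt with h | h
        · exact ne_of_lt (sub_neg.2 (hW (by linarith)))
        · exact ne_of_gt (sub_pos.2 (hW (by linarith)))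
      rw [abs_div] at h1
      have hWpos : 0 < |W (x + ε) - W x| := abs_pos.2 hWne
      rw [div_lt_iff₀ hWpos] at h1
      exact h1.le
    have hmono : ∀ s : ℝ, |s| = 1 → Monotone (fun x => δ * W x + s * f x) := by
      intro s hs
      apply mono_of_loc
      intro x
      obtain ⟨η, hη, hb⟩ := hloc x
      refine ⟨η, hη, fun y h1 h2 => ?_, fun y h1 h2 => ?_⟩
      · have := hb (y - x) (abs_pos.2 (sub_ne_zero.2 (ne_of_gt h1)))
          (by rw [abs_of_pos (by linarith)]; linarith)
        simp only [add_sub_cancel] at this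
        have hWyx : 0 < W y - W x := sub_pos.2 (hW h1)
        rw [abs_of_pos hWyx] at this
        have := abs_le.1 this
        have hsf : |s * (f y - f x)| ≤ δ * (W y - W x) := by
          rw [abs_mul, hs, one_mul]; exact abs_le.2 this
        have := (abs_le.1 hsf).1
        have : -(δ * (W y - W x)) ≤ s * f y - s * f x := by ring_nf; ring_nf at this; linarith
        linarith
      · have := hb (y - x) (abs_pos.2 (sub_ne_zero.2 (ne_of_lt h2)))
          (by rw [abs_of_neg (by linarith)]; linarith)
        simp only [add_sub_cancel] at this
        have hWyx : W y - W x < 0 := sub_neg.2 (hW h2)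
        rw [abs_of_neg hWyx] at this
        have := abs_le.1 this
        have hsf : |s * (f y - f x)| ≤ δ * -(W y - W x) := by
          rw [abs_mul, hs, one_mul]; exact abs_le.2 this
        have := (abs_le.1 hsf).2
        have : s * f y - s * f x ≤ δ * -(W y - W x) := by ring_nf; ring_nf at this; linarith
        linarith
    intro a b hab
    have h1 := hmono 1 (by norm_num) hab
    have h2 := hmono (-1) (by norm_num) hab
    simp only [one_mul, neg_one_mul] at h1 h2
    rw [abs_le]
    constructor <;> [linarith; linarith]
  -- Step 4: conclude.
  have hconst : ∀ a b : ℝ, a ≤ b → f a = f b := by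
    intro a b hab
    by_contra hne
    have habs : 0 < |f b - f a| := abs_pos.2 (sub_ne_zero.2 (Ne.symm hne))
    have hWab : 0 ≤ W b - W a := sub_nonneg.2 (hW.monotone hab)
    rcases eq_or_lt_of_le hWab with hW0 | hWpos
    · have := key 1 one_pos a b hab
      rw [← hW0] at this
      simp at this
      exact hne (sub_eq_zero.1 this).symm
    · set δ := |f b - f a| / (2 * (W b - W a)) with hδdef
      have hδpos : 0 < δ := by positivity
      have := key δ hδpos a b hab
      rw [hδdef, div_mul_eq_mul_div, mul_comm] at this
      have h2 : |f b - f a| ≤ |f b - f a| / 2 := by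
        calc |f b - f a| ≤ (W b - W a) * |f b - f a| / (2 * (W b - W a)) := this
          _ = |f b - f a| / 2 := by field_simp
      linarith
  intro x y
  rcases le_total x y with h | h
  · exact hconst x y h
  · exact (hconst y x h).symm
end
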